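/- Let p be a prime and 1 ≤ b ≤ a integers with ν_p(a-b) = 0 and {ν_p(a), ν_p(b)} = {0, k}. Then the p-adic limit of C(a·p^e, b·p^e) as e → ∞ exists and equals p^(ν_p(C(a,b))) · (-1)^(p·c·k) · z_a/(z_b·z_{a-b}), where c = a if ν_p(a)=k and c = b if ν_p(b)=k. -/

import Mathlib

/-- The unit part of `n` with respect to `p`: `n / p^(ν_p(n))`. -/
def unitPart (p n : ℕ) : ℕ := n / p ^ (padicValNat p n)

/-- `IsZ p n z` says that `z` is the p-adic limit of `(-1)^(p·u(n)·e) · u((u(n)·p^e)!)`. -/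
def IsZ (p : ℕ) [Fact p.Prime] (n : ℕ) (z : ℤ_[p]) : Prop :=
  Filter.Tendsto
    (fun e : ℕ => ((-1 : ℤ_[p]) ^ (p * unitPart p n * e) *
      (unitPart p (Nat.factorial (unitPart p n * p ^ e)) : ℤ_[p])))
    Filter.atTop (nhds z)

section helpers
variable (p : ℕ) [hp : Fact p.Prime]

theorem pow_mul_unitPart (n : ℕ) :
    p ^ padicValNat p n * unitPart p n = n :=
  Nat.mul_div_cancel' pow_padicValNat_dvd

theorem not_dvd_unitPart {n : ℕ} (hn : n ≠ 0) : ¬ p ∣ unitPart p n := by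
  intro ⟨t, ht⟩
  have h1 : p ^ (padicValNat p n + 1) ∣ n := by
    refine ⟨t, ?_⟩
    calc n = p ^ padicValNat p n * unitPart p n := (pow_mul_unitPart p n).symm
    _ = p ^ padicValNat p n * (p * t) := by rw [ht]
    _ = p ^ (padicValNat p n + 1) * t := by ring
  exact pow_succ_padicValNat_not_dvd hn h1

theorem unitPart_mul {m n : ℕ} (hm : m ≠ 0) (hn : n ≠ 0) :
    unitPart p (m * n) = unitPart p m * unitPart p n := by
  have key : m * n = p ^ (padicValNat p m + padicValNat p n) * (unitPart p m * unitPart p n) := by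
    rw [pow_add]
    calc m * n = (p ^ padicValNat p m * unitPart p m) * (p ^ padicValNat p n * unitPart p n) := by
          rw [pow_mul_unitPart p m, pow_mul_unitPart p n]
    _ = _ := by ring
  rw [unitPart, padicValNat.mul hm hn, key,
    Nat.mul_div_cancel_left _ (pow_pos hp.out.pos _)]

theorem mul_pow_eq (n e : ℕ) :
    n * p ^ e = unitPart p n * p ^ (e + padicValNat p n) := by
  conv_lhs => rw [← pow_mul_unitPart p n]
  ring

theorem even_pu (x : ℕ) : Even (p * unitPart p x + p * x) := by
  rcases Nat.even_or_odd p with he | ho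
  · exact (he.mul_right _).add (he.mul_right _)
  · have hpow : Odd (p ^ padicValNat p x) := ho.pow
    have h2 : Even (1 + p ^ padicValNat p x) := by
      rcases hpow with ⟨t, ht⟩; exact ⟨t + 1, by omega⟩
    have h3 : unitPart p x + x = (1 + p ^ padicValNat p x) * unitPart p x := by
      rw [add_mul, one_mul, pow_mul_unitPart]
    have h4 : Even (unitPart p x + x) := h3 ▸ h2.mul_right _
    have h5 : p * unitPart p x + p * x = p * (unitPart p x + x) := by ring
    exact h5 ▸ h4.mul_left p

theorem neg_one_pow_eq_of_even_add {m n : ℕ} (h : Even (m + n)) :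
    ((-1 : ℤ_[p])) ^ m = (-1) ^ n := by
  rcases Nat.even_or_odd m with hm | hm
  · have hn : Even n := (Nat.even_add.mp h).mp hm
    rw [hm.neg_one_pow, hn.neg_one_pow]
  · have hn : Odd n := by
      rw [← Nat.not_even_iff_odd]
      intro hne
      exact (Nat.not_even_iff_odd.mpr hm) ((Nat.even_add.mp h).mpr hne)
    rw [hm.neg_one_pow, hn.neg_one_pow]

theorem neg_one_pow_mul_unitPart (x t : ℕ) :
    ((-1 : ℤ_[p])) ^ (p * unitPart p x * t) = (-1) ^ (p * x * t) := by
  apply neg_one_pow_eq_of_even_add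
  have h := (even_pu p x).mul_right t
  have h2 : (p * unitPart p x + p * x) * t = p * unitPart p x * t + p * x * t := by ring
  exact h2 ▸ h

theorem norm_unitPart_fact (m : ℕ) : ‖(unitPart p m.factorial : ℤ_[p])‖ = 1 := by
  refine le_antisymm (PadicInt.norm_le_one _) (not_lt.1 fun h => ?_)
  have h2 : ‖((unitPart p m.factorial : ℤ) : ℤ_[p])‖ < 1 := by push_cast; exact h
  rw [PadicInt.norm_int_lt_one_iff_dvd] at h2
  exact not_dvd_unitPart p m.factorial_ne_zero (Int.natCast_dvd_natCast.mp h2)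



theorem val_fact_mul_pow (n e : ℕ) :
    padicValNat p (n * p ^ (e+1)).factorial = padicValNat p (n * p ^ e).factorial + n * p ^ e := by
  have h : n * p ^ (e+1) = p * (n * p ^ e) := by ring
  rw [h, padicValNat_factorial_mul]

theorem val_choose_add {n m : ℕ} (h : m ≤ n) :
    padicValNat p (n.choose m) + padicValNat p m.factorial
      + padicValNat p (n - m).factorial = padicValNat p n.factorial := by
  rw [← padicValNat.mul (Nat.choose_pos h).ne' m.factorial_ne_zero,
    ← padicValNat.mul (Nat.mul_ne_zero (Nat.choose_pos h).ne' m.factorial_ne_zero)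
      (n - m).factorial_ne_zero,
    Nat.choose_mul_factorial_mul_factorial h]

theorem val_choose_mul_pow {a b : ℕ} (hba : b ≤ a) (e : ℕ) :
    padicValNat p ((a * p ^ e).choose (b * p ^ e)) = padicValNat p (a.choose b) := by
  induction e with
  | zero => simp
  | succ e ih =>
    rw [← ih]
    have h1 := val_choose_add p (Nat.mul_le_mul_right (p ^ e) hba)
    have h2 := val_choose_add p (Nat.mul_le_mul_right (p ^ (e+1)) hba)
    have hs1 : a * p ^ e - b * p ^ e = (a - b) * p ^ e := (Nat.sub_mul a b _).symm
    have hs2 : a * p ^ (e+1) - b * p ^ (e+1) = (a - b) * p ^ (e+1) := (Nat.sub_mul a b _).symm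
    rw [hs1] at h1
    rw [hs2] at h2
    have f1 := val_fact_mul_pow p a e
    have f2 := val_fact_mul_pow p b e
    have f3 := val_fact_mul_pow p (a - b) e
    have hadd : b * p ^ e + (a - b) * p ^ e = a * p ^ e := by
      rw [← Nat.add_mul]
      congr 1
      omega
    set A := a * p ^ e
    set B := b * p ^ e
    set D := (a - b) * p ^ e
    omega

theorem star (a b : ℕ) (hba : b ≤ a) (e : ℕ) :
    ((a * p ^ e).choose (b * p ^ e)) * unitPart p (b * p ^ e).factorial
      * unitPart p ((a - b) * p ^ e).factorial
    = p ^ (padicValNat p (a.choose b)) * unitPart p (a * p ^ e).factorial := by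
  have hle : b * p ^ e ≤ a * p ^ e := Nat.mul_le_mul_right _ hba
  have hsub : a * p ^ e - b * p ^ e = (a - b) * p ^ e := (Nat.sub_mul a b _).symm
  have hfact := Nat.choose_mul_factorial_mul_factorial hle
  rw [hsub] at hfact
  have hC : (a * p ^ e).choose (b * p ^ e) ≠ 0 := (Nat.choose_pos hle).ne'
  have hu : unitPart p (a * p ^ e).factorial
      = unitPart p ((a * p ^ e).choose (b * p ^ e)) * unitPart p (b * p ^ e).factorial
        * unitPart p ((a - b) * p ^ e).factorial := by
    rw [← hfact, unitPart_mul p (Nat.mul_ne_zero hC (b * p ^ e).factorial_ne_zero)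
      ((a - b) * p ^ e).factorial_ne_zero, unitPart_mul p hC (b * p ^ e).factorial_ne_zero]
  rw [hu, ← Nat.mul_assoc, ← Nat.mul_assoc]
  have hCe : (a * p ^ e).choose (b * p ^ e)
      = p ^ (padicValNat p (a.choose b)) * unitPart p ((a * p ^ e).choose (b * p ^ e)) := by
    conv_lhs => rw [← pow_mul_unitPart p ((a * p ^ e).choose (b * p ^ e))]
    rw [val_choose_mul_pow p hba]
  conv_lhs => rw [hCe]

end helpers

open Filter

theorem stmt8 (p : ℕ) [Fact p.Prime] (a b k c : ℕ) (hb : 1 ≤ b) (hba : b ≤ a)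
    (hab : padicValNat p (a - b) = 0)
    (hk : ({padicValNat p a, padicValNat p b} : Set ℕ) = {0, k})
    (hc : (padicValNat p a = k ∧ c = a) ∨ (padicValNat p b = k ∧ c = b))
    (za zb zab : ℤ_[p]) (hza : IsZ p a za) (hzb : IsZ p b zb) (hzab : IsZ p (a - b) zab) :
    ∃ L : ℤ_[p],
      Filter.Tendsto (fun e : ℕ => (((a * p ^ e).choose (b * p ^ e) : ℕ) : ℤ_[p]))
        Filter.atTop (nhds L) ∧
      L * (zb * zab) =
        (p : ℤ_[p]) ^ (padicValNat p (a.choose b)) * (-1 : ℤ_[p]) ^ (p * c * k) * za := by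
  have hset := Set.ext_iff.mp hk
  simp only [Set.mem_insert_iff, Set.mem_singleton_iff] at hset
  have hcase : (padicValNat p a = k ∧ padicValNat p b = 0 ∧ c = a) ∨
      (padicValNat p b = k ∧ padicValNat p a = 0 ∧ c = b) := by
    have e0 := (hset 0).mpr (Or.inl rfl)
    have ea := (hset (padicValNat p a)).mp (Or.inl rfl)
    have eb := (hset (padicValNat p b)).mp (Or.inr rfl)
    rcases hc with ⟨h1, h2⟩ | ⟨h1, h2⟩
    · exact Or.inl ⟨h1, by omega, h2⟩
    · exact Or.inr ⟨h1, by omega, h2⟩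
  -- the three tendsto sequences, shifted
  have hGa : Tendsto (fun e : ℕ => ((-1 : ℤ_[p]) ^ (p * unitPart p a * (e + padicValNat p a)) *
      (unitPart p (Nat.factorial (unitPart p a * p ^ (e + padicValNat p a))) : ℤ_[p])))
      atTop (nhds za) := hza.comp (tendsto_add_atTop_nat (padicValNat p a))
  have hGb : Tendsto (fun e : ℕ => ((-1 : ℤ_[p]) ^ (p * unitPart p b * (e + padicValNat p b)) *
      (unitPart p (Nat.factorial (unitPart p b * p ^ (e + padicValNat p b))) : ℤ_[p])))
      atTop (nhds zb) := hzb.comp (tendsto_add_atTop_nat (padicValNat p b))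
  have hGab : Tendsto (fun e : ℕ => ((-1 : ℤ_[p]) ^ (p * unitPart p (a - b) * e) *
      (unitPart p (Nat.factorial (unitPart p (a - b) * p ^ e)) : ℤ_[p])))
      atTop (nhds zab) := hzab
  -- pointwise key identity
  have key : ∀ e : ℕ, (((a * p ^ e).choose (b * p ^ e) : ℕ) : ℤ_[p]) *
      (((-1 : ℤ_[p]) ^ (p * unitPart p b * (e + padicValNat p b)) *
        (unitPart p (Nat.factorial (unitPart p b * p ^ (e + padicValNat p b))) : ℤ_[p])) *
       ((-1 : ℤ_[p]) ^ (p * unitPart p (a - b) * e) *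
        (unitPart p (Nat.factorial (unitPart p (a - b) * p ^ e)) : ℤ_[p]))) =
      (p : ℤ_[p]) ^ (padicValNat p (a.choose b)) * (-1 : ℤ_[p]) ^ (p * c * k) *
      ((-1 : ℤ_[p]) ^ (p * unitPart p a * (e + padicValNat p a)) *
        (unitPart p (Nat.factorial (unitPart p a * p ^ (e + padicValNat p a))) : ℤ_[p])) := by
    intro e
    have hstar := star p a b hba e
    have hcast : (((a * p ^ e).choose (b * p ^ e) : ℕ) : ℤ_[p]) *
        (unitPart p (b * p ^ e).factorial : ℤ_[p]) *
        (unitPart p ((a - b) * p ^ e).factorial : ℤ_[p]) =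
        (p : ℤ_[p]) ^ (padicValNat p (a.choose b)) *
        (unitPart p (a * p ^ e).factorial : ℤ_[p]) := by exact_mod_cast hstar
    have harga : unitPart p a * p ^ (e + padicValNat p a) = a * p ^ e := (mul_pow_eq p a e).symm
    have hargb : unitPart p b * p ^ (e + padicValNat p b) = b * p ^ e := (mul_pow_eq p b e).symm
    have hargab : unitPart p (a - b) * p ^ e = (a - b) * p ^ e := by
      conv_lhs => rw [show (e : ℕ) = e + padicValNat p (a - b) by simp [hab]]
      exact (mul_pow_eq p (a - b) e).symm
    rw [harga, hargb, hargab]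
    -- now only signs remain to be handled
    have hsgn : ((-1 : ℤ_[p])) ^ (p * unitPart p b * (e + padicValNat p b)) *
        (-1 : ℤ_[p]) ^ (p * unitPart p (a - b) * e) =
        (-1 : ℤ_[p]) ^ (p * c * k) * (-1 : ℤ_[p]) ^ (p * unitPart p a * (e + padicValNat p a)) := by
      rw [neg_one_pow_mul_unitPart, neg_one_pow_mul_unitPart, neg_one_pow_mul_unitPart,
        ← pow_add, ← pow_add]
      apply neg_one_pow_eq_of_even_add
      obtain ⟨d, hd⟩ : ∃ d, a = b + d := ⟨a - b, by omega⟩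
      subst hd
      have hsub : b + d - b = d := by omega
      rw [hsub]
      rcases hcase with ⟨h1, h2, h3⟩ | ⟨h1, h2, h3⟩
      · rw [h1, h2, h3]
        exact ⟨p * b * e + p * d * e + p * (b + d) * k, by ring⟩
      · rw [h1, h2, h3]
        exact ⟨p * b * e + p * b * k + p * d * e, by ring⟩
    calc (((a * p ^ e).choose (b * p ^ e) : ℕ) : ℤ_[p]) *
        (((-1 : ℤ_[p]) ^ (p * unitPart p b * (e + padicValNat p b)) *
          (unitPart p (b * p ^ e).factorial : ℤ_[p])) *
         ((-1 : ℤ_[p]) ^ (p * unitPart p (a - b) * e) *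
          (unitPart p ((a - b) * p ^ e).factorial : ℤ_[p]))) =
        ((-1 : ℤ_[p]) ^ (p * unitPart p b * (e + padicValNat p b)) *
          (-1 : ℤ_[p]) ^ (p * unitPart p (a - b) * e)) *
        ((((a * p ^ e).choose (b * p ^ e) : ℕ) : ℤ_[p]) *
          (unitPart p (b * p ^ e).factorial : ℤ_[p]) *
          (unitPart p ((a - b) * p ^ e).factorial : ℤ_[p])) := by ring
      _ = ((-1 : ℤ_[p]) ^ (p * c * k) * (-1 : ℤ_[p]) ^ (p * unitPart p a * (e + padicValNat p a))) *
          ((p : ℤ_[p]) ^ (padicValNat p (a.choose b)) *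
            (unitPart p (a * p ^ e).factorial : ℤ_[p])) := by rw [hsgn, hcast]
      _ = _ := by ring
  -- norms
  have hnorm : ∀ (x : ℕ) (E : ℕ), ‖(-1 : ℤ_[p]) ^ (p * unitPart p x * E) *
      (unitPart p (Nat.factorial (unitPart p x * p ^ E)) : ℤ_[p])‖ = 1 := by
    intro x E
    rw [norm_mul, norm_unitPart_fact, mul_one]
    rcases Nat.even_or_odd (p * unitPart p x * E) with h | h
    · rw [h.neg_one_pow, norm_one]
    · rw [h.neg_one_pow, norm_neg, norm_one]
  have hzbn : ‖zb‖ = 1 := by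
    have h1 : Tendsto (fun _ : ℕ => (1 : ℝ)) atTop (nhds ‖zb‖) := by
      have := hzb.norm
      simpa only [hnorm] using this
    exact tendsto_nhds_unique h1 tendsto_const_nhds
  have hzabn : ‖zab‖ = 1 := by
    have h1 : Tendsto (fun _ : ℕ => (1 : ℝ)) atTop (nhds ‖zab‖) := by
      have := hzab.norm
      simpa only [hnorm] using this
    exact tendsto_nhds_unique h1 tendsto_const_nhds
  have hw : IsUnit (zb * zab) := by
    rw [PadicInt.isUnit_iff, norm_mul, hzbn, hzabn, one_mul]
  -- main limit computation
  set T : ℤ_[p] := (p : ℤ_[p]) ^ (padicValNat p (a.choose b)) * (-1 : ℤ_[p]) ^ (p * c * k) * za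
    with hT
  have hprod : Tendsto (fun e : ℕ =>
      ((-1 : ℤ_[p]) ^ (p * unitPart p b * (e + padicValNat p b)) *
        (unitPart p (Nat.factorial (unitPart p b * p ^ (e + padicValNat p b))) : ℤ_[p])) *
      ((-1 : ℤ_[p]) ^ (p * unitPart p (a - b) * e) *
        (unitPart p (Nat.factorial (unitPart p (a - b) * p ^ e)) : ℤ_[p])))
      atTop (nhds (zb * zab)) := hGb.mul hGab
  have h0 : Tendsto (fun e : ℕ => (((a * p ^ e).choose (b * p ^ e) : ℕ) : ℤ_[p]) *
      (((-1 : ℤ_[p]) ^ (p * unitPart p b * (e + padicValNat p b)) *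
        (unitPart p (Nat.factorial (unitPart p b * p ^ (e + padicValNat p b))) : ℤ_[p])) *
       ((-1 : ℤ_[p]) ^ (p * unitPart p (a - b) * e) *
        (unitPart p (Nat.factorial (unitPart p (a - b) * p ^ e)) : ℤ_[p]))))
      atTop (nhds T) := by
    simp only [key]
    exact tendsto_const_nhds.mul hza |>.comp (tendsto_add_atTop_nat (padicValNat p a)) |>.congr
      (fun e => rfl) |>.mono_left le_rfl
  have hdiff : Tendsto (fun e : ℕ =>
      (((a * p ^ e).choose (b * p ^ e) : ℕ) : ℤ_[p]) * (zb * zab) -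
      (((a * p ^ e).choose (b * p ^ e) : ℕ) : ℤ_[p]) *
      (((-1 : ℤ_[p]) ^ (p * unitPart p b * (e + padicValNat p b)) *
        (unitPart p (Nat.factorial (unitPart p b * p ^ (e + padicValNat p b))) : ℤ_[p])) *
       ((-1 : ℤ_[p]) ^ (p * unitPart p (a - b) * e) *
        (unitPart p (Nat.factorial (unitPart p (a - b) * p ^ e)) : ℤ_[p]))))
      atTop (nhds 0) := by
    apply squeeze_zero_norm (a := fun e : ℕ => ‖zb * zab -
      (((-1 : ℤ_[p]) ^ (p * unitPart p b * (e + padicValNat p b)) *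
        (unitPart p (Nat.factorial (unitPart p b * p ^ (e + padicValNat p b))) : ℤ_[p])) *
       ((-1 : ℤ_[p]) ^ (p * unitPart p (a - b) * e) *
        (unitPart p (Nat.factorial (unitPart p (a - b) * p ^ e)) : ℤ_[p])))‖)
    · intro e
      rw [← mul_sub, norm_mul]
      exact mul_le_of_le_one_left (norm_nonneg _) (PadicInt.norm_le_one _)
    · exact (tendsto_iff_norm_sub_tendsto_zero.mp hprod).congr (fun e => norm_sub_rev _ _)
  have hd : Tendsto (fun e : ℕ =>
      (((a * p ^ e).choose (b * p ^ e) : ℕ) : ℤ_[p]) * (zb * zab)) atTop (nhds T) := by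
    have h1 := h0.add hdiff
    rw [add_zero] at h1
    refine h1.congr (fun e => ?_)
    ring
  obtain ⟨w, hw'⟩ := hw
  refine ⟨T * ↑w⁻¹, ?_, ?_⟩
  · have h2 := hd.mul (tendsto_const_nhds (x := ((w⁻¹ : ℤ_[p]ˣ) : ℤ_[p])))
    refine h2.congr (fun e => ?_)
    rw [← hw', mul_assoc, Units.mul_inv, mul_one]
  · rw [← hw', mul_assoc, Units.inv_mul, mul_one, hT]
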